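/- (90° Lemma, part 1) Let L be an unbounded distributive pre-bilattice such that the k-order (L, ≤_k) has a bottom element 0_k and a top element 1_k. Then for all a, b ∈ L: a ∨_k b = ((a ∧_t b) ∧_t 0_k) ∨_t ((a ∨_t b) ∧_t 1_k) and a ∧_k b = ((a ∧_t b) ∧_t 1_k) ∨_t ((a ∨_t b) ∧_t 0_k). -/
import Mathlib


/-- An unbounded distributive pre-bilattice: two lattice structures
`(∨_t, ∧_t)` and `(∨_k, ∧_k)` on the same carrier, with each of the four
operations distributing over each of the other three. -/
structure DPBU (A : Type*) where
  tsup : A → A → A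
  tinf : A → A → A
  ksup : A → A → A
  kinf : A → A → A
  tsup_comm : ∀ a b, tsup a b = tsup b a
  tinf_comm : ∀ a b, tinf a b = tinf b a
  tsup_assoc : ∀ a b c, tsup (tsup a b) c = tsup a (tsup b c)
  tinf_assoc : ∀ a b c, tinf (tinf a b) c = tinf a (tinf b c)
  tsup_absorb : ∀ a b, tsup a (tinf a b) = a
  tinf_absorb : ∀ a b, tinf a (tsup a b) = a
  ksup_comm : ∀ a b, ksup a b = ksup b a
  kinf_comm : ∀ a b, kinf a b = kinf b a
  ksup_assoc : ∀ a b c, ksup (ksup a b) c = ksup a (ksup b c)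
  kinf_assoc : ∀ a b c, kinf (kinf a b) c = kinf a (kinf b c)
  ksup_absorb : ∀ a b, ksup a (kinf a b) = a
  kinf_absorb : ∀ a b, kinf a (ksup a b) = a
  tsup_tinf : ∀ a b c, tsup a (tinf b c) = tinf (tsup a b) (tsup a c)
  tsup_ksup : ∀ a b c, tsup a (ksup b c) = ksup (tsup a b) (tsup a c)
  tsup_kinf : ∀ a b c, tsup a (kinf b c) = kinf (tsup a b) (tsup a c)
  tinf_tsup : ∀ a b c, tinf a (tsup b c) = tsup (tinf a b) (tinf a c)
  tinf_ksup : ∀ a b c, tinf a (ksup b c) = ksup (tinf a b) (tinf a c)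
  tinf_kinf : ∀ a b c, tinf a (kinf b c) = kinf (tinf a b) (tinf a c)
  ksup_tsup : ∀ a b c, ksup a (tsup b c) = tsup (ksup a b) (ksup a c)
  ksup_tinf : ∀ a b c, ksup a (tinf b c) = tinf (ksup a b) (ksup a c)
  ksup_kinf : ∀ a b c, ksup a (kinf b c) = kinf (ksup a b) (ksup a c)
  kinf_tsup : ∀ a b c, kinf a (tsup b c) = tsup (kinf a b) (kinf a c)
  kinf_tinf : ∀ a b c, kinf a (tinf b c) = tinf (kinf a b) (kinf a c)
  kinf_ksup : ∀ a b c, kinf a (ksup b c) = ksup (kinf a b) (kinf a c)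

/-- The truth order `≤_t`. -/
def DPBU.tle {A : Type*} (B : DPBU A) (a b : A) : Prop := B.tsup a b = b

/-- The knowledge order `≤_k`. -/
def DPBU.kle {A : Type*} (B : DPBU A) (a b : A) : Prop := B.ksup a b = b


namespace DPBU

variable {A : Type*} (B : DPBU A)

theorem tsup_idem (a : A) : B.tsup a a = a := by
  have h := B.tsup_absorb a (B.tsup a a)
  rwa [B.tinf_absorb] at h

theorem tinf_idem (a : A) : B.tinf a a = a := by
  have h := B.tinf_absorb a (B.tinf a a)
  rwa [B.tsup_absorb] at h

theorem ksup_idem (a : A) : B.ksup a a = a := by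
  have h := B.ksup_absorb a (B.ksup a a)
  rwa [B.kinf_absorb] at h

theorem ksup_self_left (u v : A) : B.ksup (B.ksup u v) u = B.ksup u v := by
  rw [B.ksup_comm, ← B.ksup_assoc, B.ksup_idem]

theorem tinf2 (x z : A) : B.tinf (B.tinf x z) z = B.tinf x z := by
  rw [B.tinf_assoc, B.tinf_idem]

theorem tinf_sq (x y z : A) :
    B.tinf (B.tinf x z) (B.tinf y z) = B.tinf (B.tinf x y) z := calc
  B.tinf (B.tinf x z) (B.tinf y z)
      = B.tinf x (B.tinf z (B.tinf y z)) := B.tinf_assoc ..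
  _ = B.tinf x (B.tinf (B.tinf z y) z) := by rw [← B.tinf_assoc z y z]
  _ = B.tinf x (B.tinf (B.tinf y z) z) := by rw [B.tinf_comm z y]
  _ = B.tinf x (B.tinf y (B.tinf z z)) := by rw [B.tinf_assoc]
  _ = B.tinf x (B.tinf y z) := by rw [B.tinf_idem]
  _ = B.tinf (B.tinf x y) z := (B.tinf_assoc x y z).symm

/-- The k-dual structure. -/
def kflip : DPBU A where
  tsup := B.tsup
  tinf := B.tinf
  ksup := B.kinf
  kinf := B.ksup
  tsup_comm := B.tsup_comm
  tinf_comm := B.tinf_comm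
  tsup_assoc := B.tsup_assoc
  tinf_assoc := B.tinf_assoc
  tsup_absorb := B.tsup_absorb
  tinf_absorb := B.tinf_absorb
  ksup_comm := B.kinf_comm
  kinf_comm := B.ksup_comm
  ksup_assoc := B.kinf_assoc
  kinf_assoc := B.ksup_assoc
  ksup_absorb := B.kinf_absorb
  kinf_absorb := B.ksup_absorb
  tsup_tinf := B.tsup_tinf
  tsup_ksup := B.tsup_kinf
  tsup_kinf := B.tsup_ksup
  tinf_tsup := B.tinf_tsup
  tinf_ksup := B.tinf_kinf
  tinf_kinf := B.tinf_ksup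
  ksup_tsup := B.kinf_tsup
  ksup_tinf := B.kinf_tinf
  ksup_kinf := B.kinf_ksup
  kinf_tsup := B.ksup_tsup
  kinf_tinf := B.ksup_tinf
  kinf_ksup := B.ksup_kinf

/-- Claim A: on elements t-below the k-bottom, `⊔_k` coincides with `∧_t`. -/
theorem claimA (zk : A) (hbot' : ∀ x, B.ksup zk x = x)
    (u v : A) (hu : B.tinf u zk = u) (hv : B.tinf v zk = v) :
    B.ksup u v = B.tinf u v := by
  have h : ∀ x y : A, B.tinf x zk = x → B.ksup x (B.tinf x y) = B.tinf x y := by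
    intro x y hx
    have := calc
      B.tinf x y = B.tinf x (B.ksup zk y) := by rw [hbot']
      _ = B.ksup (B.tinf x zk) (B.tinf x y) := B.tinf_ksup x zk y
      _ = B.ksup x (B.tinf x y) := by rw [hx]
    exact this.symm
  have g1 : B.ksup (B.ksup u v) (B.tinf u v) = B.ksup u v := by
    rw [B.ksup_tinf, B.ksup_self_left, B.ksup_comm u v, B.ksup_self_left,
      B.ksup_comm v u, B.tinf_idem]
  have g2 : B.ksup (B.ksup u v) (B.tinf u v) = B.tinf u v := by
    rw [B.ksup_assoc, B.tinf_comm u v, h v u hv, B.tinf_comm v u, h u v hu]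
  exact g1.symm.trans g2

/-- Claim B: on elements t-below the k-top, `⊔_k` coincides with `∨_t`. -/
theorem claimB (ok : A) (hok : ∀ x, B.kinf x ok = x)
    (u v : A) (hu : B.tinf u ok = u) (hv : B.tinf v ok = v) :
    B.ksup u v = B.tsup u v := by
  have hxo : ∀ x, B.tinf x ok = x → B.tsup x ok = ok := by
    intro x hx
    have h := B.tsup_absorb ok x
    rw [B.tinf_comm, hx] at h
    rw [B.tsup_comm]; exact h
  have key : ∀ x y : A, B.tinf x ok = x → B.tinf y ok = y →
      B.kinf x (B.tsup x y) = x := by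
    intro x y hx hy
    have step1 : B.tsup x y = B.tinf (B.tsup x y) ok := by
      conv_lhs => rw [← hy]
      rw [B.tsup_tinf, hxo x hx]
    have step2 : B.kinf x (B.tsup x y) = B.tinf (B.kinf x (B.tsup x y)) x := by
      conv_lhs => rw [step1]
      rw [B.kinf_tinf, hok x]
    have step3 : B.tsup x (B.kinf x (B.tsup x y)) = x := by
      rw [step2, B.tinf_comm, B.tsup_absorb]
    have e : B.tsup x (B.kinf x y) = B.kinf x (B.tsup x y) := by
      rw [B.tsup_kinf, B.tsup_idem]
    have step5 : B.tsup x (B.kinf x (B.tsup x y)) = B.kinf x (B.tsup x y) := by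
      rw [← e, ← B.tsup_assoc, B.tsup_idem]
    rw [← step5]; exact step3
  have g1 : B.ksup (B.ksup u v) (B.tsup u v) = B.ksup u v := by
    rw [B.ksup_tsup, B.ksup_self_left, B.ksup_comm u v, B.ksup_self_left,
      B.ksup_comm v u, B.tsup_idem]
  have g2 : B.kinf (B.tsup u v) (B.ksup u v) = B.tsup u v := by
    have h := B.kinf_absorb (B.tsup u v) (B.ksup u v)
    rw [B.ksup_comm (B.tsup u v), g1] at h
    exact h
  have g3 : B.kinf (B.tsup u v) (B.ksup u v) = B.ksup u v := by
    rw [B.kinf_ksup, B.kinf_comm _ u, key u v hu hv, B.kinf_comm _ v,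
      B.tsup_comm u v, key v u hv hu]
  exact g3.symm.trans g2

/-- `0_k ∨_t 1_k` is a t-top element. -/
theorem ttop (zk ok : A) (hbot' : ∀ x, B.ksup zk x = x)
    (hok : ∀ x, B.kinf x ok = x) (x : A) :
    B.tinf x (B.tsup zk ok) = x := by
  have hcz : B.tsup zk (B.tsup zk ok) = B.tsup zk ok := by
    rw [← B.tsup_assoc, B.tsup_idem]
  have hco : B.tsup ok (B.tsup zk ok) = B.tsup zk ok := by
    rw [B.tsup_comm zk ok, ← B.tsup_assoc, B.tsup_idem]
  have s1 : B.tsup x (B.tsup zk ok)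
      = B.ksup (B.tsup zk ok) (B.tsup x (B.tsup zk ok)) := calc
    B.tsup x (B.tsup zk ok) = B.tsup (B.tsup zk ok) x := B.tsup_comm ..
    _ = B.tsup (B.tsup zk ok) (B.ksup zk x) := by rw [hbot']
    _ = B.ksup (B.tsup (B.tsup zk ok) zk) (B.tsup (B.tsup zk ok) x) :=
        B.tsup_ksup ..
    _ = B.ksup (B.tsup zk ok) (B.tsup x (B.tsup zk ok)) := by
        rw [B.tsup_comm (B.tsup zk ok) zk, hcz, B.tsup_comm (B.tsup zk ok) x]
  have s2 : B.tsup x (B.tsup zk ok)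
      = B.kinf (B.tsup x (B.tsup zk ok)) (B.tsup zk ok) := calc
    B.tsup x (B.tsup zk ok) = B.tsup (B.tsup zk ok) x := B.tsup_comm ..
    _ = B.tsup (B.tsup zk ok) (B.kinf x ok) := by rw [hok]
    _ = B.kinf (B.tsup (B.tsup zk ok) x) (B.tsup (B.tsup zk ok) ok) :=
        B.tsup_kinf ..
    _ = B.kinf (B.tsup x (B.tsup zk ok)) (B.tsup zk ok) := by
        rw [B.tsup_comm (B.tsup zk ok) x, B.tsup_comm (B.tsup zk ok) ok, hco]
  have s3 : B.kinf (B.tsup zk ok) (B.tsup x (B.tsup zk ok)) = B.tsup zk ok := by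
    have h := B.kinf_absorb (B.tsup zk ok) (B.tsup x (B.tsup zk ok))
    rwa [← s1] at h
  have hX : B.tsup x (B.tsup zk ok) = B.tsup zk ok := by
    rw [s2, B.kinf_comm, s3]
  rw [← hX, B.tinf_absorb]

end DPBU

/-- The 90° Lemma, part 1: if the k-order has bottom `0_k` and top `1_k`, then
`∨_k` and `∧_k` are definable from `∨_t`, `∧_t`, `0_k`, `1_k`. -/
theorem stmt_7 {A : Type*} (B : DPBU A) (zk ok : A)
    (hbot : ∀ a, B.kle zk a) (htop : ∀ a, B.kle a ok) :
    ∀ a b : A,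
      B.ksup a b =
        B.tsup (B.tinf (B.tinf a b) zk) (B.tinf (B.tsup a b) ok) ∧
      B.kinf a b =
        B.tsup (B.tinf (B.tinf a b) ok) (B.tinf (B.tsup a b) zk) := by
  have hbot' : ∀ x, B.ksup zk x = x := hbot
  have htop' : ∀ x, B.ksup x ok = ok := htop
  have hok : ∀ x, B.kinf x ok = x := fun x => by
    have h := B.kinf_absorb x ok; rwa [htop' x] at h
  have hokl : ∀ x, B.kinf ok x = x := fun x => by
    rw [B.kinf_comm]; exact hok x
  have hxzk : ∀ x, B.ksup x zk = x := fun x => by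
    rw [B.ksup_comm]; exact hbot' x
  have claimA' : ∀ u v : A, B.tinf u ok = u → B.tinf v ok = v →
      B.kinf u v = B.tinf u v := fun u v hu hv =>
    B.kflip.claimA ok hokl u v hu hv
  have claimB' : ∀ u v : A, B.tinf u zk = u → B.tinf v zk = v →
      B.kinf u v = B.tsup u v := fun u v hu hv =>
    B.kflip.claimB zk hxzk u v hu hv
  intro a b
  have e1 : B.tinf (B.tinf a b) zk = B.tinf (B.ksup a b) zk := calc
    B.tinf (B.tinf a b) zk
        = B.tinf (B.tinf a zk) (B.tinf b zk) := (B.tinf_sq a b zk).symm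
    _ = B.ksup (B.tinf a zk) (B.tinf b zk) :=
        (B.claimA zk hbot' _ _ (B.tinf2 a zk) (B.tinf2 b zk)).symm
    _ = B.ksup (B.tinf zk a) (B.tinf zk b) := by
        rw [B.tinf_comm a zk, B.tinf_comm b zk]
    _ = B.tinf zk (B.ksup a b) := (B.tinf_ksup zk a b).symm
    _ = B.tinf (B.ksup a b) zk := B.tinf_comm ..
  have e2 : B.tinf (B.tsup a b) ok = B.tinf (B.ksup a b) ok := calc
    B.tinf (B.tsup a b) ok = B.tinf ok (B.tsup a b) := B.tinf_comm ..
    _ = B.tsup (B.tinf ok a) (B.tinf ok b) := B.tinf_tsup ..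
    _ = B.tsup (B.tinf a ok) (B.tinf b ok) := by
        rw [B.tinf_comm ok a, B.tinf_comm ok b]
    _ = B.ksup (B.tinf a ok) (B.tinf b ok) :=
        (B.claimB ok hok _ _ (B.tinf2 a ok) (B.tinf2 b ok)).symm
    _ = B.ksup (B.tinf ok a) (B.tinf ok b) := by
        rw [B.tinf_comm a ok, B.tinf_comm b ok]
    _ = B.tinf ok (B.ksup a b) := (B.tinf_ksup ok a b).symm
    _ = B.tinf (B.ksup a b) ok := B.tinf_comm ..
  have e3 : B.tinf (B.tinf a b) ok = B.tinf (B.kinf a b) ok := calc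
    B.tinf (B.tinf a b) ok
        = B.tinf (B.tinf a ok) (B.tinf b ok) := (B.tinf_sq a b ok).symm
    _ = B.kinf (B.tinf a ok) (B.tinf b ok) :=
        (claimA' _ _ (B.tinf2 a ok) (B.tinf2 b ok)).symm
    _ = B.kinf (B.tinf ok a) (B.tinf ok b) := by
        rw [B.tinf_comm a ok, B.tinf_comm b ok]
    _ = B.tinf ok (B.kinf a b) := (B.tinf_kinf ok a b).symm
    _ = B.tinf (B.kinf a b) ok := B.tinf_comm ..
  have e4 : B.tinf (B.tsup a b) zk = B.tinf (B.kinf a b) zk := calc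
    B.tinf (B.tsup a b) zk = B.tinf zk (B.tsup a b) := B.tinf_comm ..
    _ = B.tsup (B.tinf zk a) (B.tinf zk b) := B.tinf_tsup ..
    _ = B.tsup (B.tinf a zk) (B.tinf b zk) := by
        rw [B.tinf_comm zk a, B.tinf_comm zk b]
    _ = B.kinf (B.tinf a zk) (B.tinf b zk) :=
        (claimB' _ _ (B.tinf2 a zk) (B.tinf2 b zk)).symm
    _ = B.kinf (B.tinf zk a) (B.tinf zk b) := by
        rw [B.tinf_comm a zk, B.tinf_comm b zk]
    _ = B.tinf zk (B.kinf a b) := (B.tinf_kinf zk a b).symm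
    _ = B.tinf (B.kinf a b) zk := B.tinf_comm ..
  constructor
  · rw [e1, e2, ← B.tinf_tsup, B.ttop zk ok hbot' hok]
  · rw [e3, e4, ← B.tinf_tsup, B.tsup_comm ok zk, B.ttop zk ok hbot' hok]
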